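/- Any submodule M of R^n contains a unique maximal reachability submodule M*_0, namely the sum of all reachability submodules contained in M, and this sum is itself a reachability submodule contained in M. -/

import Mathlib

open Matrix

variable {R : Type*} [CommRing R] {n m : ℕ}

/-- `U` is `(A,B)`-invariant: `A·U ⊆ U + im B`. -/
def ABInvariant (A : Matrix (Fin n) (Fin n) R) (B : Matrix (Fin n) (Fin m) R)
    (U : Submodule R (Fin n → R)) : Prop :=
  ∀ x ∈ U, A.mulVec x ∈ U ⊔ LinearMap.range B.mulVecLin

/-- `x` is reached from `0` at time `r` by a trajectory staying in `U`. -/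
def ABReached (A : Matrix (Fin n) (Fin n) R) (B : Matrix (Fin n) (Fin m) R)
    (U : Submodule R (Fin n → R)) (x : Fin n → R) (r : ℕ) : Prop :=
  ∃ (u : ℕ → Fin m → R) (xs : ℕ → Fin n → R),
    xs 0 = 0 ∧ (∀ k, xs (k + 1) = A.mulVec (xs k) + B.mulVec (u k)) ∧
    (∀ k, 1 ≤ k → k ≤ r → xs k ∈ U) ∧ xs r = x

/-- `U` is a reachability submodule. -/
def ABReachability (A : Matrix (Fin n) (Fin n) R) (B : Matrix (Fin n) (Fin m) R)
    (U : Submodule R (Fin n → R)) : Prop :=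
  ABInvariant A B U ∧ ∀ x ∈ U, ∃ r, ABReached A B U x r

lemma ABReached.mono {A : Matrix (Fin n) (Fin n) R} {B : Matrix (Fin n) (Fin m) R}
    {U V : Submodule R (Fin n → R)} (hUV : U ≤ V) {x : Fin n → R} {r : ℕ}
    (h : ABReached A B U x r) : ABReached A B V x r := by
  obtain ⟨u, xs, h0, hrec, hmem, hfin⟩ := h
  exact ⟨u, xs, h0, hrec, fun k h1 h2 => hUV (hmem k h1 h2), hfin⟩

lemma ABReached.pad {A : Matrix (Fin n) (Fin n) R} {B : Matrix (Fin n) (Fin m) R}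
    {U : Submodule R (Fin n → R)} {x : Fin n → R} {r : ℕ}
    (h : ABReached A B U x r) (t : ℕ) : ABReached A B U x (t + r) := by
  obtain ⟨u, xs, h0, hrec, hmem, hfin⟩ := h
  refine ⟨fun k => if k < t then 0 else u (k - t), fun k => xs (k - t), by simp [h0],
    fun k => ?_, fun k h1 h2 => ?_, by simp [hfin]⟩
  · by_cases hk : k < t
    · have h1 : k + 1 - t = 0 := by omega
      have h2 : k - t = 0 := by omega
      simp [hk, h1, h2, h0, Matrix.mulVec_zero]
    · have h1 : k + 1 - t = (k - t) + 1 := by omega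
      simp [hk, h1, hrec]
  · by_cases hk : k ≤ t
    · show xs (k - t) ∈ U
      have : k - t = 0 := by omega
      rw [this, h0]; exact U.zero_mem
    · exact hmem (k - t) (by omega) (by omega)

lemma ABReached.add {A : Matrix (Fin n) (Fin n) R} {B : Matrix (Fin n) (Fin m) R}
    {U : Submodule R (Fin n → R)} {x y : Fin n → R} {r : ℕ}
    (hx : ABReached A B U x r) (hy : ABReached A B U y r) :
    ABReached A B U (x + y) r := by
  obtain ⟨u, xs, h0, hrec, hmem, hfin⟩ := hx
  obtain ⟨v, ys, h0', hrec', hmem', hfin'⟩ := hy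
  refine ⟨u + v, xs + ys, by simp [h0, h0'], fun k => ?_,
    fun k h1 h2 => U.add_mem (hmem k h1 h2) (hmem' k h1 h2), by simp [hfin, hfin']⟩
  simp only [Pi.add_apply, hrec, hrec', Matrix.mulVec_add]
  abel

theorem stmt_4 (A : Matrix (Fin n) (Fin n) R) (B : Matrix (Fin n) (Fin m) R)
    (M : Submodule R (Fin n → R)) :
    ABReachability A B (sSup {U : Submodule R (Fin n → R) | ABReachability A B U ∧ U ≤ M}) ∧
    sSup {U : Submodule R (Fin n → R) | ABReachability A B U ∧ U ≤ M} ≤ M ∧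
    ∀ U : Submodule R (Fin n → R), ABReachability A B U → U ≤ M →
      U ≤ sSup {U : Submodule R (Fin n → R) | ABReachability A B U ∧ U ≤ M} := by
  set S : Set (Submodule R (Fin n → R)) := {U | ABReachability A B U ∧ U ≤ M} with hS
  set W : Submodule R (Fin n → R) := sSup S with hW
  have hWi : W = ⨆ U : S, (U : Submodule R (Fin n → R)) := sSup_eq_iSup' S
  have hle : ∀ U ∈ S, U ≤ W := fun U hU => le_sSup hU
  refine ⟨⟨?_, ?_⟩, sSup_le fun U hU => hU.2, fun U hR hM => le_sSup ⟨hR, hM⟩⟩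
  · -- invariance
    intro x hx
    rw [hWi] at hx
    refine Submodule.iSup_induction (motive := fun x => A.mulVec x ∈ W ⊔ LinearMap.range B.mulVecLin)
      _ hx (fun U x hxU => ?_) (by simp [Matrix.mulVec_zero]) (fun x y hx hy => ?_)
    · have := U.2.1.1 x hxU
      exact (sup_le_sup_right (hle U U.2) _) this
    · show A.mulVec (x + y) ∈ W ⊔ LinearMap.range B.mulVecLin
      rw [Matrix.mulVec_add]
      exact Submodule.add_mem _ hx hy
  · -- reachability
    intro x hx
    rw [hWi] at hx
    refine Submodule.iSup_induction (motive := fun x => ∃ r, ABReached A B W x r)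
      _ hx (fun U x hxU => ?_) ⟨0, fun _ => 0, fun _ => 0, rfl,
        by simp [Matrix.mulVec_zero], fun k h1 h2 => by omega, rfl⟩
      (fun x y hx hy => ?_)
    · obtain ⟨r, hr⟩ := U.2.1.2 x hxU
      exact ⟨r, hr.mono (hle U U.2)⟩
    · obtain ⟨r, hr⟩ := hx
      obtain ⟨s, hs⟩ := hy
      refine ⟨s + r, ABReached.add (hr.pad s) ?_⟩
      rw [Nat.add_comm]
      exact hs.pad r
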